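/- For every involution ι_{jk} of the lattice L (j ≠ k in {1,...,7}) sending C ↦ C + F - E_j - E_k, F ↦ F, E_j ↦ F - E_j, E_k ↦ F - E_k and fixing the other E_i, and for every class D = C + aF - Σ b_n E_n with a ≥ 0, b_n ∈ {0,1}, Σ b_n = 2a + 1, one has ι_{jk}(D) ≠ D and D·ι_{jk}(D) = 0. -/

import Mathlib

/-- The geometric Picard lattice of a standard rational conic bundle of degree 1:
the free abelian group with basis `C, F, E₁, …, E₇`, realized as `Fin 9 → ℤ`
(coordinate 0 for `C`, coordinate 1 for `F`, coordinates 2–8 for `E₁,…,E₇`). -/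
abbrev Pic1 := Fin 9 → ℤ

/-- The index in `Fin 9` of the basis vector `E_n`. -/
def eIdx (n : Fin 7) : Fin 9 := ⟨n.1 + 2, by have := n.isLt; omega⟩

/-- The basis class `C`. -/
def Cv : Pic1 := fun i => if i = 0 then 1 else 0

/-- The basis class `F` (the class of a fiber). -/
def Fv : Pic1 := fun i => if i = 1 then 1 else 0

/-- The basis class `E_n`. -/
def Ev (n : Fin 7) : Pic1 := fun i => if i = eIdx n then 1 else 0

/-- The intersection pairing: `C·C = F·F = 0`, `C·F = 1`, `E_i·E_i = -1`, and all
other products among basis vectors vanish. -/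
def B (v w : Pic1) : ℤ :=
  v 0 * w 1 + v 1 * w 0 - ∑ n : Fin 7, v (eIdx n) * w (eIdx n)

/-- The canonical class `K = -2C - 2F + E₁ + ⋯ + E₇`. -/
def Kv : Pic1 := fun i => -2 * Cv i - 2 * Fv i + ∑ n : Fin 7, Ev n i

/-- The linear map `ι_S` determined on the basis by
`C ↦ C + (|S|/2)F - Σ_{n ∈ S} Eₙ`, `F ↦ F`, `Eₙ ↦ F - Eₙ` for `n ∈ S` and
`Eₙ ↦ Eₙ` otherwise, written out in coordinates. -/
def iotaS (S : Finset (Fin 7)) (v : Pic1) : Pic1 := fun i =>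
  if i.1 = 0 then v 0
  else if i.1 = 1 then ((S.card : ℤ) / 2) * v 0 + v 1 + ∑ n ∈ S, v (eIdx n)
  else if (⟨i.1 - 2, by have := i.isLt; omega⟩ : Fin 7) ∈ S then -(v 0) - v i
  else v i

/-- For every involution `ι_{jk}` (`j ≠ k`), sending `C ↦ C + F - Eⱼ - Eₖ`, `F ↦ F`,
`Eⱼ ↦ F - Eⱼ`, `Eₖ ↦ F - Eₖ` and fixing the other `Eᵢ`, and for every class
`D = C + aF - Σ bₙEₙ` with `a ≥ 0`, `bₙ ∈ {0,1}`, `Σ bₙ = 2a + 1`, one has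
`ι_{jk}(D) ≠ D` and `D·ι_{jk}(D) = 0`. -/
lemma D_zero (a : ℤ) (b : Fin 7 → ℤ) :
    (Cv 0 + a * Fv 0 - ∑ n : Fin 7, b n * Ev n 0) = 1 := by
  have h : ∀ n : Fin 7, b n * Ev n 0 = 0 := by
    intro n; simp [Ev, eIdx, Fin.ext_iff, -Fin.val_eq_zero_iff]
  simp [Cv, Fv, Finset.sum_congr rfl (fun n _ => h n)]

lemma D_one (a : ℤ) (b : Fin 7 → ℤ) :
    (Cv 1 + a * Fv 1 - ∑ n : Fin 7, b n * Ev n 1) = a := by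
  have h : ∀ n : Fin 7, b n * Ev n 1 = 0 := by
    intro n; simp [Ev, eIdx, Fin.ext_iff, -Fin.val_eq_zero_iff]
  simp [Cv, Fv, Finset.sum_congr rfl (fun n _ => h n)]

lemma D_e (a : ℤ) (b : Fin 7 → ℤ) (m : Fin 7) :
    (Cv (eIdx m) + a * Fv (eIdx m) - ∑ n : Fin 7, b n * Ev n (eIdx m)) = -b m := by
  have h : ∀ n : Fin 7, b n * Ev n (eIdx m) = if n = m then b n else 0 := by
    intro n
    by_cases hnm : n = m <;> simp [Ev, eIdx, Fin.ext_iff, hnm]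
    omega
  rw [Finset.sum_congr rfl (fun n _ => h n), Finset.sum_ite_eq' Finset.univ m b]
  simp [Cv, Fv, eIdx, Fin.ext_iff, -Fin.val_eq_zero_iff]

lemma iota_zero (S : Finset (Fin 7)) (v : Pic1) : iotaS S v 0 = v 0 := by
  simp [iotaS]

lemma iota_one (S : Finset (Fin 7)) (v : Pic1) :
    iotaS S v 1 = ((S.card : ℤ) / 2) * v 0 + v 1 + ∑ n ∈ S, v (eIdx n) := by
  simp [iotaS]

lemma iota_e (S : Finset (Fin 7)) (v : Pic1) (m : Fin 7) :
    iotaS S v (eIdx m) = if m ∈ S then -(v 0) - v (eIdx m) else v (eIdx m) := by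
  have h0 : (eIdx m).1 ≠ 0 := by simp [eIdx]
  have h1 : (eIdx m).1 ≠ 1 := by simp [eIdx]
  have hm : (⟨(eIdx m).1 - 2, by have := (eIdx m).isLt; omega⟩ : Fin 7) = m := by
    simp [eIdx]
  rw [iotaS, if_neg h0, if_neg h1, hm]

theorem iota_jk_moves_neg_one_sections (j k : Fin 7) (hjk : j ≠ k)
    (a : ℤ) (b : Fin 7 → ℤ) (ha : 0 ≤ a) (hb : ∀ n, b n = 0 ∨ b n = 1)
    (hsum : ∑ n : Fin 7, b n = 2 * a + 1) :
    iotaS ({j, k} : Finset (Fin 7)) (fun i => Cv i + a * Fv i - ∑ n : Fin 7, b n * Ev n i) ≠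
        (fun i => Cv i + a * Fv i - ∑ n : Fin 7, b n * Ev n i) ∧
    B (fun i => Cv i + a * Fv i - ∑ n : Fin 7, b n * Ev n i)
        (iotaS ({j, k} : Finset (Fin 7))
          (fun i => Cv i + a * Fv i - ∑ n : Fin 7, b n * Ev n i)) = 0 := by
  set v : Pic1 := fun i => Cv i + a * Fv i - ∑ n : Fin 7, b n * Ev n i with hv
  set S : Finset (Fin 7) := {j, k} with hS
  have hcard : S.card = 2 := Finset.card_pair hjk
  have hv0 : v 0 = 1 := D_zero a b
  have hv1 : v 1 = a := D_one a b
  have hve : ∀ m, v (eIdx m) = -b m := D_e a b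
  have hij : iotaS S v (eIdx j) = -1 + b j := by
    rw [iota_e, if_pos (by simp [hS]), hv0, hve]; ring
  constructor
  · intro h
    have := congrFun h (eIdx j)
    rw [hij, hve] at this
    rcases hb j with h' | h' <;> omega
  · have hie : ∀ m, iotaS S v (eIdx m) = if m ∈ S then -1 + b m else -b m := by
      intro m
      rw [iota_e, hv0, hve]
      by_cases hm : m ∈ S <;> simp [hm] <;> ring
    have hsumS : ∑ n ∈ S, v (eIdx n) = -b j - b k := by
      rw [hS, Finset.sum_pair hjk, hve, hve]; ring
    have hi1 : iotaS S v 1 = 1 + a - b j - b k := by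
      rw [iota_one, hcard, hv0, hv1, hsumS]; norm_num; ring
    have hi0 : iotaS S v 0 = 1 := by rw [iota_zero, hv0]
    rw [B, hv0, hv1, hi0, hi1]
    have hterm : ∀ n : Fin 7, v (eIdx n) * iotaS S v (eIdx n)
        = b n - (if n ∈ S then b n else 0) := by
      intro n
      rw [hve, hie]
      rcases hb n with h' | h' <;> by_cases hn : n ∈ S <;> simp [h', hn]
    rw [Finset.sum_congr rfl (fun n _ => hterm n), Finset.sum_sub_distrib, hsum]
    have : ∑ n : Fin 7, (if n ∈ S then b n else 0) = b j + b k := by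
      rw [Finset.sum_ite_mem, Finset.univ_inter, hS, Finset.sum_pair hjk]
    rw [this]; ring
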